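/- arXiv:0801.2524 — 2 statements merged into one kernel-verified Lean document; each statement's English description precedes it below -/
import Mathlib

section
/- For K ≥ 2, the class C(K) of permutations obtainable from an identity permutation by one duplication-loss step of width at most K equals the class of permutations avoiding all patterns in B = {321, 3142, 2143} ∪ D, where D is the set of permutations of size K+1 with exactly one descent that do not start with 1 nor end with K+1. Moreover |B| = 3 + 2^{K−1}. -/
def descents (l : List ℕ) : ℕ :=
  (l.zip l.tail).countP (fun p => decide (p.2 < p.1))
def IsPermList (n : ℕ) (l : List ℕ) : Prop :=
  l.Perm (List.range' 1 n)
def OrderIsoList (a b : List ℕ) : Prop :=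
  a.length = b.length ∧
    ∀ i j, i < j → j < a.length → (a.getD i 0 < a.getD j 0 ↔ b.getD i 0 < b.getD j 0)

def IsPattern (π σ : List ℕ) : Prop :=
  ∃ s, s.Sublist σ ∧ OrderIsoList π s
inductive Interleave : List ℕ → List ℕ → List ℕ → Prop
  | nil : Interleave [] [] []
  | left {x : ℕ} {l a b : List ℕ} : Interleave l a b → Interleave (x :: l) (x :: a) b
  | right {x : ℕ} {l a b : List ℕ} : Interleave l a b → Interleave (x :: l) a (x :: b)

def DLStep (K : ℕ) (τ σ : List ℕ) : Prop :=
  ∃ pre w post w1 w2 : List ℕ, τ = pre ++ w ++ post ∧ w.length ≤ K ∧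
    Interleave w w1 w2 ∧ σ = pre ++ (w1 ++ w2) ++ post

def DLIter (K : ℕ) : ℕ → List ℕ → List ℕ → Prop
  | 0, τ, σ => τ = σ
  | p + 1, τ, σ => ∃ μ, DLStep K τ μ ∧ DLIter K p μ σ

def ObtainableIn (K p : ℕ) (τ σ : List ℕ) : Prop :=
  ∃ q ≤ p, DLIter K q τ σ

def DLBasis (K : ℕ) : Set (List ℕ) :=
  {[3, 2, 1], [3, 1, 4, 2], [2, 1, 4, 3]} ∪
    {d | IsPermList (K + 1) d ∧ descents d = 1 ∧ d.getD 0 0 ≠ 1 ∧ d.getD K 0 ≠ K + 1}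

open List

local instance : IsAntisymm ℕ (· < ·) := ⟨fun _ _ h h' => (Nat.lt_asymm h h').elim⟩

lemma getD_mem {l : List ℕ} {i : ℕ} (h : i < l.length) : l.getD i 0 ∈ l := by
  rw [getD_eq_getElem _ _ h]; exact getElem_mem h

lemma getD_ne {l : List ℕ} (hn : l.Nodup) {i j : ℕ} (hij : i ≠ j) (hi : i < l.length)
    (hj : j < l.length) : l.getD i 0 ≠ l.getD j 0 := by
  rw [getD_eq_getElem _ _ hi, getD_eq_getElem _ _ hj]
  exact fun h => hij (hn.getElem_inj_iff.mp h)

lemma sorted_getD_lt {l : List ℕ} (h : l.Pairwise (· < ·)) {i j : ℕ} (hij : i < j)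
    (hj : j < l.length) : l.getD i 0 < l.getD j 0 := by
  rw [getD_eq_getElem _ _ (hij.trans hj), getD_eq_getElem _ _ hj]
  exact List.pairwise_iff_getElem.mp h i j (hij.trans hj) hj hij

lemma sorted_range' (s n : ℕ) : Pairwise (· < ·) (range' s n) := pairwise_lt_range'

lemma range'_toFinset (s n : ℕ) : (range' s n).toFinset = Finset.Ico s (s + n) := by
  ext x; simp only [List.mem_toFinset, mem_range', Finset.mem_Ico]
  constructor
  · rintro ⟨i, hi, rfl⟩; omega
  · rintro ⟨h1, h2⟩
    refine ⟨x - s, by omega, by omega⟩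

lemma sorted_eq_of_toFinset_eq {l₁ l₂ : List ℕ} (h1 : l₁.Pairwise (· < ·)) (h2 : l₂.Pairwise (· < ·))
    (h : l₁.toFinset = l₂.toFinset) : l₁ = l₂ := by
  have n1 : l₁.Nodup := h1.nodup
  have n2 : l₂.Nodup := h2.nodup
  exact List.Perm.eq_of_pairwise' h1 h2 (List.perm_of_nodup_nodup_toFinset_eq n1 n2 h)

-- descents basics
lemma descents_nil : descents [] = 0 := rfl
lemma descents_single (x : ℕ) : descents [x] = 0 := rfl
lemma descents_cons_cons (x y : ℕ) (t : List ℕ) :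
    descents (x :: y :: t) = (if y < x then 1 else 0) + descents (y :: t) := by
  simp only [descents, List.tail, List.zip_cons_cons, List.countP_cons]
  by_cases h : y < x <;> simp [h] <;> omega

lemma descents_sorted {l : List ℕ} (h : l.Pairwise (· < ·)) : descents l = 0 := by
  induction l with
  | nil => rfl
  | cons x t ih =>
    cases t with
    | nil => rfl
    | cons y t' =>
      have hxy : x < y := (pairwise_cons.mp h).1 y (mem_cons_self)
      rw [descents_cons_cons, ih h.of_cons, if_neg (by omega)]

lemma descents_sorted_append {u v : List ℕ} (hu : u.Pairwise (· < ·)) (hv : v.Pairwise (· < ·))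
    (hune : u ≠ []) (hvne : v ≠ []) (hd : v.headD 0 < u.getLastD 0) :
    descents (u ++ v) = 1 := by
  induction u with
  | nil => exact absurd rfl hune
  | cons x t ih =>
    cases t with
    | nil =>
      cases v with
      | nil => exact absurd rfl hvne
      | cons y v' =>
        simp only [List.cons_append, List.nil_append, List.singleton_append]
        rw [descents_cons_cons]
        have : y < x := by simpa using hd
        rw [if_pos this, descents_sorted hv]
    | cons z t' =>
      have hxz : x < z := (pairwise_cons.mp hu).1 z (mem_cons_self)
      have : ((x :: z :: t') ++ v) = x :: z :: (t' ++ v) := by simp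
      rw [this, descents_cons_cons, if_neg (by omega)]
      have := ih hu.of_cons (by simp) (by simpa using hd)
      simpa using this

lemma sorted_of_descents_zero {l : List ℕ} (hn : l.Nodup) (h : descents l = 0) :
    l.Pairwise (· < ·) := by
  induction l with
  | nil => exact Pairwise.nil
  | cons x t ih =>
    cases t with
    | nil => simp
    | cons y t' =>
      rw [descents_cons_cons] at h
      have hxy : ¬ y < x := by by_contra hc; rw [if_pos hc] at h; omega
      rw [if_neg hxy] at h
      have hs := ih hn.of_cons (by omega)
      have hne : x ≠ y := by simp at hn; tauto
      refine pairwise_cons.mpr ⟨fun z hz => ?_, hs⟩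
      rcases mem_cons.mp hz with rfl | hz
      · omega
      · have := (pairwise_cons.mp hs).1 z hz
        omega
lemma split_of_descents_one {l : List ℕ} (hn : l.Nodup) (h : descents l = 1) :
    ∃ u v : List ℕ, l = u ++ v ∧ u.Pairwise (· < ·) ∧ v.Pairwise (· < ·) ∧ u ≠ [] ∧ v ≠ [] ∧
      v.headD 0 < u.getLastD 0 := by
  induction l with
  | nil => simp [descents] at h
  | cons x t ih =>
    cases t with
    | nil => simp [descents] at h
    | cons y t' =>
      rw [descents_cons_cons] at h
      by_cases hxy : y < x
      · rw [if_pos hxy] at h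
        have h0 : descents (y :: t') = 0 := by omega
        exact ⟨[x], y :: t', by simp, by simp,
          sorted_of_descents_zero hn.of_cons h0, by simp, by simp, by simpa using hxy⟩
      · rw [if_neg hxy] at h
        obtain ⟨u, v, hev, hsu, hsv, hu, hv, hd⟩ := ih hn.of_cons (by omega)
        have hune : u ≠ [] := hu
        have hyu : u.headD 0 = y := by
          cases u with
          | nil => exact absurd rfl hu
          | cons a u' => simpa using congrArg (fun l => l.headD 0) hev.symm
        have hne : x ≠ y := by simp at hn; tauto
        have hxlt : x < y := by omega
        refine ⟨x :: u, v, by simp [hev], ?_, hsv, by simp, hv, ?_⟩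
        · refine pairwise_cons.mpr ⟨fun z hz => ?_, hsu⟩
          cases u with
          | nil => exact absurd rfl hu
          | cons a u' =>
            simp only [headD_cons] at hyu; subst hyu
            rcases mem_cons.mp hz with rfl | hz
            · exact hxlt
            · exact hxlt.trans ((pairwise_cons.mp hsu).1 z hz)
        · cases u with
          | nil => exact absurd rfl hu
          | cons a u' =>
            cases u' with
            | nil =>
              simp only [getLastD_cons, getLastD_nil] at hd ⊢
              simpa using hd
            | cons b u'' => simpa [List.getLastD_cons] using hd
  
lemma Interleave.perm {w a b : List ℕ} (h : Interleave w a b) : w.Perm (a ++ b) := by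
  induction h with
  | nil => simp
  | @left x l a b _ ih => simpa using ih.cons x
  | @right x l a b _ ih => exact (ih.cons x).trans List.perm_middle.symm

lemma interleave_of_sorted : ∀ {w a b : List ℕ}, w.Pairwise (· < ·) → a.Pairwise (· < ·) →
    b.Pairwise (· < ·) → (a ++ b).Perm w → Interleave w a b := by
  intro w
  induction w with
  | nil =>
    intro a b _ _ _ hp
    rw [List.perm_nil, List.append_eq_nil_iff] at hp
    rw [hp.1, hp.2]; exact Interleave.nil
  | cons x w' ih =>
    intro a b hw ha hb hp
    have hxmem : x ∈ a ++ b := hp.symm.mem_iff.mp (mem_cons_self)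
    have hxlt : ∀ z ∈ w', x < z := fun z hz => (pairwise_cons.mp hw).1 z hz
    rcases List.mem_append.mp hxmem with hxa | hxb
    · cases a with
      | nil => simp at hxa
      | cons ha0 a' =>
        have hax : ha0 = x := by
          by_contra hne
          have h1 : ha0 ∈ x :: w' := hp.mem_iff.mp (by simp)
          have h2 : x < ha0 := hxlt _ (by rcases mem_cons.mp h1 with h | h; exact absurd h hne; exact h)
          rcases mem_cons.mp hxa with h | h
          · exact hne h.symm
          · exact absurd ((pairwise_cons.mp ha).1 x h) (by omega)
        subst hax
        have hp' : (ha0 :: (a' ++ b)).Perm (ha0 :: w') := by simpa using hp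
        exact Interleave.left (ih hw.of_cons ha.of_cons hb hp'.cons_inv)
    · cases b with
      | nil => simp at hxb
      | cons hb0 b' =>
        have hbx : hb0 = x := by
          by_contra hne
          have h1 : hb0 ∈ x :: w' := hp.mem_iff.mp (by simp)
          have h2 : x < hb0 := hxlt _ (by rcases mem_cons.mp h1 with h | h; exact absurd h hne; exact h)
          rcases mem_cons.mp hxb with h | h
          · exact hne h.symm
          · exact absurd ((pairwise_cons.mp hb).1 x h) (by omega)
        subst hbx
        refine Interleave.right (ih hw.of_cons ha hb.of_cons ?_)
        have hmid : (a ++ hb0 :: b').Perm (hb0 :: (a ++ b')) := List.perm_middle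
        exact (hmid.symm.trans hp).cons_inv
def rnk (s : List ℕ) (x : ℕ) : ℕ := s.countP (fun y => decide (y ≤ x))
def std (s : List ℕ) : List ℕ := s.map (rnk s)

lemma rnk_le_rnk (s : List ℕ) {x y : ℕ} (h : x ≤ y) : rnk s x ≤ rnk s y :=
  List.countP_mono_left (fun z _ hz => by simp at hz ⊢; omega)

lemma rnk_lt_rnk (s : List ℕ) {x y : ℕ} (h : x < y) (hy : y ∈ s) : rnk s x < rnk s y := by
  have hsub : s.filter (fun z => decide (z ≤ x)) <+ s.filter (fun z => decide (z ≤ y)) :=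
    List.monotone_filter_right s (fun a ha => by simp at ha ⊢; omega)
  have hylt : y ∈ s.filter (fun z => decide (z ≤ y)) := by simp [hy]
  have hyn : y ∉ s.filter (fun z => decide (z ≤ x)) := by simp; intro _; omega
  rw [rnk, rnk, List.countP_eq_length_filter, List.countP_eq_length_filter]
  rcases Nat.lt_or_ge (s.filter (fun z => decide (z ≤ x))).length
    (s.filter (fun z => decide (z ≤ y))).length with h' | h'
  · exact h'
  · exact absurd (hsub.eq_of_length (le_antisymm hsub.length_le h')) (by intro he; rw [he] at hyn; exact hyn hylt)

lemma rnk_iff (s : List ℕ) {x y : ℕ} (hx : x ∈ s) (hy : y ∈ s) :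
    x < y ↔ rnk s x < rnk s y := by
  constructor
  · exact fun h => rnk_lt_rnk s h hy
  · intro h
    by_contra hc
    exact absurd (rnk_le_rnk s (by omega : y ≤ x)) (by omega)

lemma rnk_pos {s : List ℕ} {x : ℕ} (hx : x ∈ s) : 1 ≤ rnk s x := by
  rw [rnk, List.countP_eq_length_filter]
  have : x ∈ s.filter (fun z => decide (z ≤ x)) := by simp [hx]
  exact List.length_pos_iff.mpr (fun he => by simp [he] at this)

lemma rnk_le_length (s : List ℕ) (x : ℕ) : rnk s x ≤ s.length := List.countP_le_length

lemma rnk_ge_two {s : List ℕ} {x y : ℕ} (hx : x ∈ s) (hy : y ∈ s) (h : y < x) :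
    2 ≤ rnk s x := by
  rw [rnk, List.countP_eq_length_filter]
  have h1 : x ∈ s.filter (fun z => decide (z ≤ x)) := by simp [hx]
  have h2 : y ∈ s.filter (fun z => decide (z ≤ x)) := by simp [hy]; omega
  calc 2 = ({y, x} : Finset ℕ).card := by rw [Finset.card_insert_of_notMem (by simp; omega), Finset.card_singleton]
  _ ≤ (s.filter (fun z => decide (z ≤ x))).toFinset.card := by
      apply Finset.card_le_card; intro z hz
      simp only [Finset.mem_insert, Finset.mem_singleton] at hz
      rcases hz with rfl | rfl
      · simpa using h2
      · simpa using h1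
  _ ≤ (s.filter (fun z => decide (z ≤ x))).length := List.toFinset_card_le _

lemma rnk_lt_length {s : List ℕ} {x y : ℕ} (hy : y ∈ s) (h : x < y) :
    rnk s x < s.length := by
  have := rnk_lt_rnk s h hy
  have := rnk_le_length s y
  omega

lemma std_length (s : List ℕ) : (std s).length = s.length := List.length_map _

lemma std_getD {s : List ℕ} {i : ℕ} (h : i < s.length) :
    (std s).getD i 0 = rnk s (s.getD i 0) := by
  rw [getD_eq_getElem _ _ (by simpa [std_length]), getD_eq_getElem _ _ h]
  simp [std]

lemma std_nodup {s : List ℕ} (hn : s.Nodup) : (std s).Nodup := by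
  refine hn.map_on (fun x hx y hy hxy => ?_)
  rcases Nat.lt_trichotomy x y with h | h | h
  · exact absurd hxy (by have := rnk_lt_rnk s h hy; omega)
  · exact h
  · exact absurd hxy (by have := rnk_lt_rnk s h hx; omega)

lemma std_perm {s : List ℕ} (hn : s.Nodup) : IsPermList s.length (std s) := by
  have hnd := std_nodup hn
  have hnr : (range' 1 s.length).Nodup := (sorted_range' 1 s.length).nodup
  refine List.perm_of_nodup_nodup_toFinset_eq hnd hnr ?_
  rw [range'_toFinset]
  have hsub : (std s).toFinset ⊆ Finset.Ico 1 (1 + s.length) := by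
    intro z hz
    simp only [List.mem_toFinset, std, List.mem_map] at hz
    obtain ⟨x, hx, rfl⟩ := hz
    simp only [Finset.mem_Ico]
    exact ⟨rnk_pos hx, by have := rnk_le_length s x; omega⟩
  refine Finset.eq_of_subset_of_card_le hsub ?_
  rw [Nat.card_Ico]
  have : (std s).toFinset.card = s.length := by rw [List.toFinset_card_of_nodup hnd, std_length]
  omega

lemma std_orderIso {s : List ℕ} (hn : s.Nodup) : OrderIsoList (std s) s := by
  refine ⟨std_length s, fun i j hij hj => ?_⟩
  rw [std_length] at hj
  rw [std_getD (hij.trans hj), std_getD hj]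
  exact (rnk_iff s (getD_mem (hij.trans hj)) (getD_mem hj)).symm

lemma std_descents (s : List ℕ) : descents (std s) = descents s := by
  unfold descents std
  rw [← List.map_tail, List.zip_map, List.countP_map]
  refine List.countP_congr (fun p hp => ?_)
  obtain ⟨h1, h2⟩ := List.of_mem_zip hp
  have h2' : p.2 ∈ s := List.mem_of_mem_tail h2
  simp only [Function.comp, Prod.map, decide_eq_true_eq]
  exact (rnk_iff s h2' h1).symm
lemma sorted_split (m : ℕ) {l : List ℕ} (h : l.Pairwise (· < ·)) :
    l = l.filter (fun x => decide (x < m)) ++ l.filter (fun x => decide (m ≤ x)) := by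
  induction l with
  | nil => rfl
  | cons a t ih =>
    by_cases ha : a < m
    · rw [List.filter_cons_of_pos (by simpa using ha), List.filter_cons_of_neg (by simpa using ha)]
      simpa using ih h.of_cons
    · have hall : ∀ y ∈ t, m ≤ y := fun y hy =>
        le_trans (by omega) (le_of_lt ((pairwise_cons.mp h).1 y hy))
      rw [List.filter_cons_of_neg (by simpa using ha), List.filter_cons_of_pos (by simp; omega)]
      have : t.filter (fun x => decide (x < m)) = [] :=
        List.filter_eq_nil_iff.mpr (fun y hy => by simp; exact hall y hy)
      rw [this]
      have : t.filter (fun x => decide (m ≤ x)) = t :=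
        List.filter_eq_self.mpr (fun y hy => by simp; exact hall y hy)
      rw [this]
      simp

lemma getLastD_mem : ∀ {l : List ℕ}, l ≠ [] → l.getLastD 0 ∈ l
  | [], h => absurd rfl h
  | [a], _ => by simp
  | a :: b :: t, _ => by
    have := getLastD_mem (l := b :: t) (by simp)
    simp only [List.getLastD_cons] at this ⊢
    exact mem_cons_of_mem _ this

lemma headD_mem : ∀ {l : List ℕ}, l ≠ [] → l.headD 0 ∈ l
  | [], h => absurd rfl h
  | a :: t, _ => by simp

lemma getLastD_cons_ne {a : ℕ} {t : List ℕ} (h : t ≠ []) :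
    (a :: t).getLastD 0 = t.getLastD 0 := by
  cases t with
  | nil => exact absurd rfl h
  | cons b t' => simp [List.getLastD_cons]

lemma le_getLastD_of_sorted : ∀ {l : List ℕ}, l.Pairwise (· < ·) → ∀ {x : ℕ}, x ∈ l → x ≤ l.getLastD 0
  | [], _, x, hx => by simp at hx
  | a :: t, h, x, hx => by
    cases t with
    | nil => simp at hx ⊢; omega
    | cons b t' =>
      rw [getLastD_cons_ne (by simp)]
      rcases mem_cons.mp hx with rfl | hx
      · have hm := getLastD_mem (l := b :: t') (by simp)
        exact le_of_lt ((pairwise_cons.mp h).1 _ hm)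
      · exact le_getLastD_of_sorted h.of_cons hx

lemma headD_le_of_sorted {l : List ℕ} (h : l.Pairwise (· < ·)) {x : ℕ} (hx : x ∈ l) :
    l.headD 0 ≤ x := by
  cases l with
  | nil => simp at hx
  | cons a t =>
    rcases mem_cons.mp hx with rfl | hx
    · simp
    · simpa using le_of_lt ((pairwise_cons.mp h).1 x hx)

lemma getLastD_eq_of_max {l : List ℕ} (h : l.Pairwise (· < ·)) {x : ℕ} (hx : x ∈ l)
    (hmax : ∀ y ∈ l, y ≤ x) : l.getLastD 0 = x := by
  have h1 := le_getLastD_of_sorted h hx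
  have h2 := hmax _ (getLastD_mem (ne_nil_of_mem hx))
  omega

lemma headD_eq_of_min {l : List ℕ} (h : l.Pairwise (· < ·)) {x : ℕ} (hx : x ∈ l)
    (hmin : ∀ y ∈ l, x ≤ y) : l.headD 0 = x := by
  have h1 := headD_le_of_sorted h hx
  have h2 := hmin _ (headD_mem (ne_nil_of_mem hx))
  omega

lemma no_two_descents {A B s : List ℕ} (hA : A.Pairwise (· < ·)) (hB : B.Pairwise (· < ·))
    (hs : s <+ A ++ B) {i j : ℕ} (hij : i < j) (hj : j + 1 < s.length)
    (h1 : s.getD (i + 1) 0 < s.getD i 0) (h2 : s.getD (j + 1) 0 < s.getD j 0) : False := by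
  obtain ⟨s₁, s₂, rfl, hs₁, hs₂⟩ := List.sublist_append_iff.mp hs
  have hso₁ : s₁.Pairwise (· < ·) := hA.sublist hs₁
  have hso₂ : s₂.Pairwise (· < ·) := hB.sublist hs₂
  rw [List.length_append] at hj
  have key : ∀ p, p + 1 < s₁.length + s₂.length →
      (s₁ ++ s₂).getD (p + 1) 0 < (s₁ ++ s₂).getD p 0 → s₁.length = p + 1 := by
    intro p hp hdesc
    rcases Nat.lt_or_ge (p + 1) s₁.length with h | h
    · rw [List.getD_append _ _ _ _ h, List.getD_append _ _ _ _ (by omega)] at hdesc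
      exact absurd (sorted_getD_lt hso₁ (by omega : p < p + 1) h) (by omega)
    · rcases Nat.lt_or_ge p s₁.length with h' | h'
      · omega
      · rw [List.getD_append_right _ _ _ _ h', List.getD_append_right _ _ _ _ (by omega)] at hdesc
        have := sorted_getD_lt hso₂ (by omega : p - s₁.length < p + 1 - s₁.length) (by omega)
        omega
  have k1 := key i (by omega) h1
  have k2 := key j (by omega) h2
  omega

lemma triple_sublist {l : List ℕ} {i j k : ℕ} (hij : i < j) (hjk : j < k) (hk : k < l.length) :
    [l.getD i 0, l.getD j 0, l.getD k 0] <+ l := by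
  have hi : i < l.length := by omega
  have hj : j < l.length := by omega
  have h := List.map_getElem_sublist (l := l) (is := [⟨i, hi⟩, ⟨j, hj⟩, ⟨k, hk⟩])
    (by simp [hij, hjk, hij.trans hjk])
  rw [getD_eq_getElem _ _ hi, getD_eq_getElem _ _ hj, getD_eq_getElem _ _ hk]
  simpa using h

lemma quad_sublist {l : List ℕ} {i j k m : ℕ} (hij : i < j) (hjk : j < k) (hkm : k < m)
    (hm : m < l.length) :
    [l.getD i 0, l.getD j 0, l.getD k 0, l.getD m 0] <+ l := by
  have hi : i < l.length := by omega
  have hj : j < l.length := by omega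
  have hk : k < l.length := by omega
  have h := List.map_getElem_sublist (l := l) (is := [⟨i, hi⟩, ⟨j, hj⟩, ⟨k, hk⟩, ⟨m, hm⟩])
    (by simp [hij, hjk, hkm, hij.trans hjk, hjk.trans hkm, (hij.trans hjk).trans hkm])
  rw [getD_eq_getElem _ _ hi, getD_eq_getElem _ _ hj, getD_eq_getElem _ _ hk,
    getD_eq_getElem _ _ hm]
  simpa using h

lemma orderIso_321 {x y z : ℕ} (h1 : z < y) (h2 : y < x) : OrderIsoList [3, 2, 1] [x, y, z] := by
  refine ⟨rfl, fun i j hij hj => ?_⟩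
  simp only [List.length_cons, List.length_nil] at hj
  interval_cases j <;> interval_cases i <;> simp [List.getD] <;> omega

lemma orderIso_3142 {a b c d : ℕ} (h1 : b < d) (h2 : d < a) (h3 : a < c) :
    OrderIsoList [3, 1, 4, 2] [a, b, c, d] := by
  refine ⟨rfl, fun i j hij hj => ?_⟩
  simp only [List.length_cons, List.length_nil] at hj
  interval_cases j <;> interval_cases i <;> simp [List.getD] <;> omega

lemma orderIso_2143 {a b c d : ℕ} (h1 : b < a) (h2 : a < d) (h3 : d < c) :
    OrderIsoList [2, 1, 4, 3] [a, b, c, d] := by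
  refine ⟨rfl, fun i j hij hj => ?_⟩
  simp only [List.length_cons, List.length_nil] at hj
  interval_cases j <;> interval_cases i <;> simp [List.getD] <;> omega

lemma pattern_of_two_descents {K : ℕ} {l : List ℕ} (hn : l.Nodup) {i j : ℕ} (hij : i < j)
    (hj : j + 1 < l.length) (h1 : l.getD (i + 1) 0 < l.getD i 0)
    (h2 : l.getD (j + 1) 0 < l.getD j 0) : ∃ b ∈ DLBasis K, IsPattern b l := by
  set x := l.getD i 0
  set y := l.getD (i + 1) 0
  set z := l.getD j 0
  set w := l.getD (j + 1) 0
  have hmem321 : [3, 2, 1] ∈ DLBasis K := Or.inl (by simp)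
  rcases Nat.lt_or_ge (i + 1) j with hlt | hge
  · have hxz : x ≠ z := getD_ne hn (by omega) (by omega) (by omega)
    rcases Nat.lt_or_ge z x with hzx | hxz'
    · exact ⟨_, hmem321, [x, z, w], triple_sublist (by omega) (by omega) (by omega),
        orderIso_321 h2 hzx⟩
    · have hxz2 : x < z := by omega
      have hyw : y ≠ w := getD_ne hn (by omega) (by omega) (by omega)
      rcases Nat.lt_or_ge w y with hwy | hyw'
      · exact ⟨_, hmem321, [x, y, w], triple_sublist (by omega) (by omega) (by omega),
          orderIso_321 hwy h1⟩
      · have hyw2 : y < w := by omega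
        have hxw : x ≠ w := getD_ne hn (by omega) (by omega) (by omega)
        rcases Nat.lt_or_ge w x with hwx | hxw'
        · refine ⟨[3, 1, 4, 2], Or.inl (by simp), [x, y, z, w],
            quad_sublist (by omega) hlt (by omega) (by omega), orderIso_3142 hyw2 hwx hxz2⟩
        · refine ⟨[2, 1, 4, 3], Or.inl (by simp), [x, y, z, w],
            quad_sublist (by omega) hlt (by omega) (by omega), orderIso_2143 h1 (by omega) h2⟩
  · have hj' : i + 1 = j := by omega
    have hyz : l.getD (i + 1) 0 = l.getD j 0 := by rw [hj']
    exact ⟨_, hmem321, [x, z, w], triple_sublist (by omega) (by omega) (by omega),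
      orderIso_321 h2 (by omega)⟩
lemma Interleave.sublist_left {w a b : List ℕ} (h : Interleave w a b) : a <+ w := by
  induction h with
  | nil => exact Sublist.refl _
  | left _ ih => exact ih.cons₂ _
  | right _ ih => exact ih.cons _

lemma Interleave.sublist_right {w a b : List ℕ} (h : Interleave w a b) : b <+ w := by
  induction h with
  | nil => exact Sublist.refl _
  | left _ ih => exact ih.cons _
  | right _ ih => exact ih.cons₂ _

lemma mem_range'_iff {s n x : ℕ} : x ∈ range' s n ↔ s ≤ x ∧ x < s + n := by
  rw [mem_range']
  constructor
  · rintro ⟨i, hi, rfl⟩; omega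
  · rintro ⟨h1, h2⟩; exact ⟨x - s, by omega, by omega⟩

lemma forward_dir {K n : ℕ} {l : List ℕ} (hl : IsPermList n l)
    (hstep : DLStep K (List.range' 1 n) l) : ∀ b ∈ DLBasis K, ¬ IsPattern b l := by
  obtain ⟨pre, w, post, w1, w2, heq, hwK, hI, hleq⟩ := hstep
  set a := pre.length with ha
  set k := w.length with hk
  set p := post.length with hp
  have hnlen : n = a + k + p := by
    have h := congrArg List.length heq
    simp only [List.length_range', List.length_append] at h
    rw [ha, hk, hp]
    omega
  have hsplit : List.range' 1 n = List.range' 1 a ++ List.range' (1 + a) k ++ List.range' (1 + a + k) p := by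
    have e1 : List.range' 1 a ++ List.range' (1 + a) k = List.range' 1 (k + a) := by
      have h := List.range'_append (s := 1) (m := a) (n := k) (step := 1)
      rw [Nat.add_comm k a]; simpa using h
    have e2 : List.range' 1 (k + a) ++ List.range' (1 + a + k) p = List.range' 1 (p + (k + a)) := by
      have h := List.range'_append (s := 1) (m := k + a) (n := p) (step := 1)
      have h' : 1 + 1 * (k + a) = 1 + a + k := by omega
      rw [h'] at h
      rwa [Nat.add_comm (k + a) p] at h
    rw [e1, e2, hnlen]
    congr 1
    omega
  rw [hsplit] at heq
  have h1 : List.range' 1 a = pre ∧ List.range' (1 + a) k ++ List.range' (1 + a + k) p = w ++ post := by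
    apply List.append_inj
    · rw [← List.append_assoc, ← List.append_assoc]; exact heq
    · simp [List.length_range', ha]
  have h2 : List.range' (1 + a) k = w ∧ List.range' (1 + a + k) p = post := by
    apply List.append_inj h1.2
    simp [List.length_range', hk]
  obtain ⟨hpre, -⟩ := h1
  obtain ⟨hw, hpost⟩ := h2
  have hnodup : l.Nodup := hl.nodup_iff.mpr (sorted_range' 1 n).nodup
  -- value bounds
  have hw1mem : ∀ x ∈ w1, 1 + a ≤ x ∧ x < 1 + a + k := by
    intro x hx
    have := hI.sublist_left.mem hx
    rw [← hw] at this
    exact mem_range'_iff.mp this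
  have hw2mem : ∀ x ∈ w2, 1 + a ≤ x ∧ x < 1 + a + k := by
    intro x hx
    have := hI.sublist_right.mem hx
    rw [← hw] at this
    exact mem_range'_iff.mp this
  have hpremem : ∀ x ∈ pre, 1 ≤ x ∧ x ≤ a := by
    intro x hx; rw [← hpre] at hx
    have := mem_range'_iff.mp hx; omega
  have hpostmem : ∀ x ∈ post, 1 + a + k ≤ x := by
    intro x hx; rw [← hpost] at hx
    have := mem_range'_iff.mp hx; omega
  -- the two sorted halves
  have hsortpre : pre.Pairwise (· < ·) := by rw [← hpre]; exact sorted_range' _ _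
  have hsortpost : post.Pairwise (· < ·) := by rw [← hpost]; exact sorted_range' _ _
  have hsortw : w.Pairwise (· < ·) := by rw [← hw]; exact sorted_range' _ _
  have hsortw1 : w1.Pairwise (· < ·) := hsortw.sublist hI.sublist_left
  have hsortw2 : w2.Pairwise (· < ·) := hsortw.sublist hI.sublist_right
  have hA : (pre ++ w1).Pairwise (· < ·) :=
    List.pairwise_append.mpr ⟨hsortpre, hsortw1, fun x hx y hy => by
      have := (hpremem x hx).2; have := (hw1mem y hy).1; omega⟩
  have hB : (w2 ++ post).Pairwise (· < ·) :=
    List.pairwise_append.mpr ⟨hsortw2, hsortpost, fun x hx y hy => by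
      have := (hw2mem x hx).2; have := hpostmem y hy; omega⟩
  have hlAB : l = (pre ++ w1) ++ (w2 ++ post) := by rw [hleq]; simp
  rintro b hb ⟨s, hs, hiso⟩
  have hsnodup : s.Nodup := hnodup.sublist hs
  have hsAB : s <+ (pre ++ w1) ++ (w2 ++ post) := hlAB ▸ hs
  rcases hb with hb | hb
  · -- the three small patterns
    simp only [Set.mem_insert_iff, Set.mem_singleton_iff] at hb
    rcases hb with rfl | rfl | rfl
    · have hlen : s.length = 3 := by simpa using hiso.1.symm
      have d0 : s.getD 1 0 < s.getD 0 0 := by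
        have hne := getD_ne hsnodup (by omega : (0:ℕ) ≠ 1) (by omega) (by omega)
        have hno : ¬ (s.getD 0 0 < s.getD 1 0) := by
          intro h
          have := (hiso.2 0 1 (by omega) (by simp)).mpr h
          simp [List.getD_cons_zero, List.getD_cons_succ] at this
        omega
      have d1 : s.getD 2 0 < s.getD 1 0 := by
        have hne := getD_ne hsnodup (by omega : (1:ℕ) ≠ 2) (by omega) (by omega)
        have hno : ¬ (s.getD 1 0 < s.getD 2 0) := by
          intro h
          have := (hiso.2 1 2 (by omega) (by simp)).mpr h
          simp [List.getD_cons_zero, List.getD_cons_succ] at this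
        omega
      exact no_two_descents hA hB hsAB (by omega : 0 < 1) (by omega) d0 d1
    · have hlen : s.length = 4 := by simpa using hiso.1.symm
      have d0 : s.getD 1 0 < s.getD 0 0 := by
        have hne := getD_ne hsnodup (by omega : (0:ℕ) ≠ 1) (by omega) (by omega)
        have hno : ¬ (s.getD 0 0 < s.getD 1 0) := by
          intro h
          have := (hiso.2 0 1 (by omega) (by simp)).mpr h
          simp [List.getD_cons_zero, List.getD_cons_succ] at this
        omega
      have d1 : s.getD 3 0 < s.getD 2 0 := by
        have hne := getD_ne hsnodup (by omega : (2:ℕ) ≠ 3) (by omega) (by omega)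
        have hno : ¬ (s.getD 2 0 < s.getD 3 0) := by
          intro h
          have := (hiso.2 2 3 (by omega) (by simp)).mpr h
          simp [List.getD_cons_zero, List.getD_cons_succ] at this
        omega
      exact no_two_descents hA hB hsAB (by omega : 0 < 2) (by omega) d0 d1
    · have hlen : s.length = 4 := by simpa using hiso.1.symm
      have d0 : s.getD 1 0 < s.getD 0 0 := by
        have hne := getD_ne hsnodup (by omega : (0:ℕ) ≠ 1) (by omega) (by omega)
        have hno : ¬ (s.getD 0 0 < s.getD 1 0) := by
          intro h
          have := (hiso.2 0 1 (by omega) (by simp)).mpr h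
          simp [List.getD_cons_zero, List.getD_cons_succ] at this
        omega
      have d1 : s.getD 3 0 < s.getD 2 0 := by
        have hne := getD_ne hsnodup (by omega : (2:ℕ) ≠ 3) (by omega) (by omega)
        have hno : ¬ (s.getD 2 0 < s.getD 3 0) := by
          intro h
          have := (hiso.2 2 3 (by omega) (by simp)).mpr h
          simp [List.getD_cons_zero, List.getD_cons_succ] at this
        omega
      exact no_two_descents hA hB hsAB (by omega : 0 < 2) (by omega) d0 d1
  · -- patterns of size K+1 with one descent
    obtain ⟨hbperm, hbdesc, hb0, hbK⟩ := hb
    have hblen : b.length = K + 1 := by simpa [List.length_range'] using hbperm.length_eq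
    have hslen : s.length = K + 1 := by rw [← hiso.1, hblen]
    have hbnodup : b.Nodup := hbperm.nodup_iff.mpr (sorted_range' _ _).nodup
    have hbmem : ∀ x ∈ b, 1 ≤ x ∧ x ≤ K + 1 := by
      intro x hx
      have := mem_range'_iff.mp (hbperm.mem_iff.mp hx); omega
    -- index of value 1
    have h1b : (1 : ℕ) ∈ b := hbperm.mem_iff.mpr (mem_range'_iff.mpr (by omega))
    obtain ⟨q, hq, hbq⟩ := List.mem_iff_getElem.mp h1b
    have hbq' : b.getD q 0 = 1 := by rw [getD_eq_getElem _ _ hq, hbq]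
    have hqne : q ≠ 0 := fun h => hb0 (h ▸ hbq')
    -- index of value K+1
    have hKb : (K + 1 : ℕ) ∈ b := hbperm.mem_iff.mpr (mem_range'_iff.mpr (by omega))
    obtain ⟨r, hr, hbr⟩ := List.mem_iff_getElem.mp hKb
    have hbr' : b.getD r 0 = K + 1 := by rw [getD_eq_getElem _ _ hr, hbr]
    have hrne : r ≠ K := fun h => hbK (h ▸ hbr')
    rw [hblen] at hq hr
    -- s has an inversion from position 0 to q, and from r to K
    have hb0mem := getD_mem (l := b) (i := 0) (by omega)
    have hb0big : 1 < b.getD 0 0 := by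
      have := hbmem _ hb0mem
      rcases this with ⟨h1, _⟩
      rcases Nat.lt_or_ge 1 (b.getD 0 0) with h | h
      · exact h
      · exact absurd (by omega : b.getD 0 0 = 1) hb0
    have hbKmem := getD_mem (l := b) (i := K) (by omega)
    have hbKsmall : b.getD K 0 < K + 1 := by
      have := hbmem _ hbKmem
      rcases Nat.lt_or_ge (b.getD K 0) (K + 1) with h | h
      · exact h
      · exact absurd (by omega : b.getD K 0 = K + 1) hbK
    have hs0q : s.getD q 0 < s.getD 0 0 := by
      have := hiso.2 0 q (by omega) (by omega)
      have hne := getD_ne hsnodup (by omega : (0:ℕ) ≠ q) (by omega) (by omega)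
      rw [hbq'] at this
      omega
    have hsrK : s.getD K 0 < s.getD r 0 := by
      have hrK : r < K := by omega
      have := hiso.2 r K hrK (by omega)
      have hne := getD_ne hsnodup (by omega : r ≠ K) (by omega) (by omega)
      rw [hbr'] at this
      omega
    -- split s along l = pre ++ (w1 ++ w2) ++ post
    have hs' : s <+ pre ++ ((w1 ++ w2) ++ post) := by
      rw [hleq] at hs; simpa using hs
    obtain ⟨s₁, s₂₃, rfl, hs₁, hs₂₃⟩ := List.sublist_append_iff.mp hs'
    obtain ⟨s₂, s₃, rfl, hs₂, hs₃⟩ := List.sublist_append_iff.mp hs₂₃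
    have hsort₁ : s₁.Pairwise (· < ·) := hsortpre.sublist hs₁
    have hsort₃ : s₃.Pairwise (· < ·) := hsortpost.sublist hs₃
    have hmem₂ : ∀ x ∈ s₂, 1 + a ≤ x ∧ x < 1 + a + k := fun x hx => by
      rcases List.mem_append.mp (hs₂.mem hx) with h | h
      · exact hw1mem x h
      · exact hw2mem x h
    have hlen123 : s₁.length + (s₂.length + s₃.length) = K + 1 := by
      simpa [List.length_append] using hslen
    -- s₁ = []
    have hs₁nil : s₁ = [] := by
      by_contra hne
      have hl₁ : 0 < s₁.length := List.length_pos_iff.mpr hne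
      have hgd0 : (s₁ ++ (s₂ ++ s₃)).getD 0 0 = s₁.getD 0 0 := List.getD_append _ _ _ _ hl₁
      have h0pre : (s₁ ++ (s₂ ++ s₃)).getD 0 0 ≤ a := by
        rw [hgd0]
        exact (hpremem _ (hs₁.mem (getD_mem hl₁))).2
      rcases Nat.lt_or_ge q s₁.length with hql | hql
      · have : (s₁ ++ (s₂ ++ s₃)).getD q 0 = s₁.getD q 0 := List.getD_append _ _ _ _ hql
        rw [this, hgd0] at hs0q
        exact absurd (sorted_getD_lt hsort₁ (by omega : 0 < q) hql) (by omega)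
      · have hqlt : q - s₁.length < (s₂ ++ s₃).length := by
          simp only [List.length_append] at hlen123 ⊢; omega
        have : (s₁ ++ (s₂ ++ s₃)).getD q 0 = (s₂ ++ s₃).getD (q - s₁.length) 0 :=
          List.getD_append_right _ _ _ _ hql
        have hmem : (s₂ ++ s₃).getD (q - s₁.length) 0 ∈ s₂ ++ s₃ := getD_mem hqlt
        have hbig : 1 + a ≤ (s₂ ++ s₃).getD (q - s₁.length) 0 := by
          rcases List.mem_append.mp hmem with h | h
          · exact (hmem₂ _ h).1
          · have := hpostmem _ (hs₃.mem h); omega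
        rw [this] at hs0q
        omega
    -- s₃ = []
    have hs₃nil : s₃ = [] := by
      by_contra hne
      have hl₃ : 0 < s₃.length := List.length_pos_iff.mpr hne
      have hKidx : s₁.length + s₂.length ≤ K := by omega
      have hgdK : (s₁ ++ (s₂ ++ s₃)).getD K 0 = s₃.getD (K - s₁.length - s₂.length) 0 := by
        rw [List.getD_append_right _ _ _ _ (by omega : s₁.length ≤ K),
          List.getD_append_right _ _ _ _ (by omega : s₂.length ≤ K - s₁.length)]
      have hKm : K - s₁.length - s₂.length < s₃.length := by omega
      have hKpost : 1 + a + k ≤ (s₁ ++ (s₂ ++ s₃)).getD K 0 := by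
        rw [hgdK]
        exact hpostmem _ (hs₃.mem (getD_mem hKm))
      rcases Nat.lt_or_ge r (s₁.length + s₂.length) with hrl | hrl
      · have hrsmall : (s₁ ++ (s₂ ++ s₃)).getD r 0 ≤ a + k := by
          rcases Nat.lt_or_ge r s₁.length with h | h
          · rw [List.getD_append _ _ _ _ h]
            have := (hpremem _ (hs₁.mem (getD_mem h))).2; omega
          · rw [List.getD_append_right _ _ _ _ h,
              List.getD_append _ _ _ _ (by omega : r - s₁.length < s₂.length)]
            have := (hmem₂ _ (getD_mem (by omega : r - s₁.length < s₂.length))).2; omega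
        omega
      · have hgdr : (s₁ ++ (s₂ ++ s₃)).getD r 0 = s₃.getD (r - s₁.length - s₂.length) 0 := by
          rw [List.getD_append_right _ _ _ _ (by omega : s₁.length ≤ r),
            List.getD_append_right _ _ _ _ (by omega : s₂.length ≤ r - s₁.length)]
        have hrm : r - s₁.length - s₂.length < s₃.length := by omega
        rw [hgdr, hgdK] at hsrK
        have := sorted_getD_lt hsort₃
          (by omega : r - s₁.length - s₂.length < K - s₁.length - s₂.length) hKm
        omega
    -- now s = s₂ lives in the window, too many values
    subst hs₁nil hs₃nil
    simp only [List.nil_append, List.append_nil, List.length_nil, Nat.zero_add,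
      Nat.add_zero] at hlen123 hmem₂ hsnodup
    have hsub : s₂.toFinset ⊆ Finset.Ico (1 + a) (1 + a + k) := by
      intro x hx
      rw [List.mem_toFinset] at hx
      exact Finset.mem_Ico.mpr (hmem₂ x hx)
    have hcard := Finset.card_le_card hsub
    rw [Nat.card_Ico, List.toFinset_card_of_nodup hsnodup] at hcard
    omega
lemma headD_eq_getD_zero (l : List ℕ) : l.headD 0 = l.getD 0 0 := by cases l <;> rfl

lemma getLastD_eq_getD : ∀ {l : List ℕ}, l ≠ [] → l.getLastD 0 = l.getD (l.length - 1) 0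
  | [], h => absurd rfl h
  | [a], _ => rfl
  | a :: b :: t, _ => by
    rw [getLastD_cons_ne (by simp), getLastD_eq_getD (l := b :: t) (by simp)]
    simp

lemma getLastD_concat (xs : List ℕ) (y : ℕ) : (xs ++ [y]).getLastD 0 = y := by
  induction xs with
  | nil => rfl
  | cons a t ih => rw [List.cons_append, getLastD_cons_ne (by simp), ih]

lemma getLastD_mem_drop {l : List ℕ} {j : ℕ} (hj : j < l.length) :
    l.getLastD 0 ∈ l.drop j := by
  have hne : l ≠ [] := by intro h; rw [h] at hj; simp at hj
  have h1 : l.getLastD 0 = (l.drop j).getD (l.length - 1 - j) 0 := by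
    rw [getLastD_eq_getD hne, getD_eq_getElem _ _ (by omega : l.length - 1 < l.length),
      getD_eq_getElem _ _ (by simp [List.length_drop]; omega)]
    rw [List.getElem_drop]
    congr 1
    omega
  rw [h1]
  exact getD_mem (by simp [List.length_drop]; omega)

lemma unique_descent_split {K n : ℕ} {l : List ℕ} (hl : IsPermList n l)
    (havoid : ∀ b ∈ DLBasis K, ¬ IsPattern b l) (hns : ¬ l.Pairwise (· < ·)) :
    ∃ u v : List ℕ, l = u ++ v ∧ u.Pairwise (· < ·) ∧ v.Pairwise (· < ·) ∧ u ≠ [] ∧ v ≠ [] ∧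
      v.headD 0 < u.getLastD 0 := by
  have hnodup : l.Nodup := hl.nodup_iff.mpr (sorted_range' 1 n).nodup
  have hch : ¬ l.IsChain (· < ·) := fun h => hns (List.isChain_iff_pairwise.mp h)
  rw [List.isChain_iff_getElem] at hch
  push_neg at hch
  obtain ⟨i, hi, hdesc⟩ := hch
  have hi1 : i + 1 < l.length := by omega
  have hdi : l[i + 1]'hi1 < l[i]'(by omega) := by
    have hne : l[i]'(by omega) ≠ l[i + 1]'hi1 := fun h => by
      have := hnodup.getElem_inj_iff.mp h; omega
    omega
  have hdiD : l.getD (i + 1) 0 < l.getD i 0 := by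
    rw [getD_eq_getElem _ _ hi1, getD_eq_getElem _ _ (by omega : i < l.length)]
    exact hdi
  have hasc : ∀ j, (hj : j + 1 < l.length) → j ≠ i → l[j]'(by omega) < l[j + 1]'hj := by
    intro j hj hji
    by_contra hc
    have hne : l[j]'(by omega) ≠ l[j + 1]'hj := fun h => by
      have := hnodup.getElem_inj_iff.mp h; omega
    have hdj : l.getD (j + 1) 0 < l.getD j 0 := by
      rw [getD_eq_getElem _ _ hj, getD_eq_getElem _ _ (by omega : j < l.length)]
      omega
    rcases Nat.lt_or_ge i j with h | h
    · obtain ⟨b, hb, hpat⟩ := pattern_of_two_descents (K := K) hnodup h hj hdiD hdj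
      exact havoid b hb hpat
    · have hji' : j < i := by omega
      obtain ⟨b, hb, hpat⟩ := pattern_of_two_descents (K := K) hnodup hji' hi1 hdj hdiD
      exact havoid b hb hpat
  refine ⟨l.take (i + 1), l.drop (i + 1), (List.take_append_drop _ _).symm, ?_, ?_, ?_, ?_, ?_⟩
  · apply List.isChain_iff_pairwise.mp
    rw [List.isChain_iff_getElem]
    intro p hp
    rw [List.length_take] at hp
    simp only [List.get_eq_getElem, List.getElem_take]
    exact hasc p (by omega) (by omega)
  · apply List.isChain_iff_pairwise.mp
    rw [List.isChain_iff_getElem]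
    intro p hp
    rw [List.length_drop] at hp
    simp only [List.get_eq_getElem, List.getElem_drop]
    have h := hasc (i + 1 + p) (by omega) (by omega)
    have he : i + 1 + (p + 1) = i + 1 + p + 1 := by omega
    simp only [he]
    exact h
  · exact List.length_pos_iff.mp (by rw [List.length_take]; omega)
  · exact List.length_pos_iff.mp (by rw [List.length_drop]; omega)
  · rw [headD_eq_getD_zero, getLastD_eq_getD (List.length_pos_iff.mp (by rw [List.length_take]; omega))]
    have hlt : (l.take (i + 1)).length - 1 = i := by rw [List.length_take]; omega
    rw [hlt]
    have e1 : (l.drop (i + 1)).getD 0 0 = l.getD (i + 1) 0 := by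
      rw [getD_eq_getElem _ _ (by rw [List.length_drop]; omega), getD_eq_getElem _ _ hi1]
      simp [List.getElem_drop]
    have e2 : (l.take (i + 1)).getD i 0 = l.getD i 0 := by
      rw [getD_eq_getElem _ _ (by rw [List.length_take]; omega),
        getD_eq_getElem _ _ (by omega : i < l.length)]
      simp [List.getElem_take]
    rw [e1, e2]
    exact hdiD
lemma range'_decomp {m M n : ℕ} (h1 : 1 ≤ m) (h2 : m ≤ M) (h3 : M ≤ n) :
    List.range' 1 n =
      List.range' 1 (m - 1) ++ List.range' m (M - m + 1) ++ List.range' (M + 1) (n - M) := by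
  have e1 : List.range' 1 (m - 1) ++ List.range' m (M - m + 1) =
      List.range' 1 (M - m + 1 + (m - 1)) := by
    have h := List.range'_append (s := 1) (m := m - 1) (n := M - m + 1) (step := 1)
    have h' : 1 + 1 * (m - 1) = m := by omega
    rw [h', Nat.add_comm (m - 1) (M - m + 1)] at h; exact h
  have e2 : List.range' 1 (M - m + 1 + (m - 1)) ++ List.range' (M + 1) (n - M) =
      List.range' 1 (n - M + (M - m + 1 + (m - 1))) := by
    have h := List.range'_append (s := 1) (m := M - m + 1 + (m - 1)) (n := n - M) (step := 1)
    have h' : 1 + 1 * (M - m + 1 + (m - 1)) = M + 1 := by omega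
    rw [h', Nat.add_comm (M - m + 1 + (m - 1)) (n - M)] at h; exact h
  rw [e1, e2]; congr 1; omega

lemma headD_take {l : List ℕ} {t : ℕ} (ht : 1 ≤ t) (hl : l ≠ []) :
    (l.take t).headD 0 = l.headD 0 := by
  cases l with
  | nil => exact absurd rfl hl
  | cons c rest =>
    cases t with
    | zero => omega
    | succ t' => simp

lemma backward_dir {K n : ℕ} (hK : 2 ≤ K) {l : List ℕ} (hl : IsPermList n l)
    (havoid : ∀ b ∈ DLBasis K, ¬ IsPattern b l) : DLStep K (List.range' 1 n) l := by
  by_cases hsort : l.Pairwise (· < ·)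
  · have hid : l = List.range' 1 n := List.Perm.eq_of_pairwise' hsort (sorted_range' 1 n) hl
    exact ⟨List.range' 1 n, [], [], [], [], by simp, by simp, Interleave.nil, by simp [hid]⟩
  obtain ⟨u, v, hluv, hsu, hsv, hune, hvne, hdesc⟩ := unique_descent_split hl havoid hsort
  have hnodup : l.Nodup := hl.nodup_iff.mpr (sorted_range' 1 n).nodup
  have hlmem : ∀ x, x ∈ l ↔ 1 ≤ x ∧ x ≤ n := fun x => by
    rw [hl.mem_iff, mem_range'_iff]; omega
  set m := v.headD 0 with hm
  set M := u.getLastD 0 with hM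
  have hmv : m ∈ v := headD_mem hvne
  have hMu : M ∈ u := getLastD_mem hune
  have hml : m ∈ l := by rw [hluv]; exact List.mem_append.mpr (Or.inr hmv)
  have hMl : M ∈ l := by rw [hluv]; exact List.mem_append.mpr (Or.inl hMu)
  have h1m : 1 ≤ m := ((hlmem m).mp hml).1
  have hMn : M ≤ n := ((hlmem M).mp hMl).2
  have hmM : m < M := hdesc
  have hdisj : ∀ x ∈ u, x ∉ v := by
    have h := hnodup
    rw [hluv, List.nodup_append] at h
    exact fun x hx hv => h.2.2 x hx x hv rfl
  have humem : ∀ x ∈ u, x ≤ M := fun x hx => le_getLastD_of_sorted hsu hx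
  have hvmem : ∀ x ∈ v, m ≤ x := fun x hx => headD_le_of_sorted hsv hx
  set ulow := u.filter (fun x => decide (x < m)) with hulowd
  set u' := u.filter (fun x => decide (m ≤ x)) with hu'd
  have huspl : u = ulow ++ u' := sorted_split m hsu
  set v' := v.filter (fun x => decide (x < M + 1)) with hv'd
  set vhigh := v.filter (fun x => decide (M + 1 ≤ x)) with hvhighd
  have hvspl : v = v' ++ vhigh := sorted_split (M + 1) hsv
  have hsu' : u'.Pairwise (· < ·) := hsu.filter _
  have hsv' : v'.Pairwise (· < ·) := hsv.filter _
  have hu'mem : ∀ x ∈ u', m ≤ x ∧ x ≤ M := fun x hx => by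
    rw [hu'd, List.mem_filter] at hx
    exact ⟨by simpa using hx.2, humem x hx.1⟩
  have hv'mem : ∀ x ∈ v', m ≤ x ∧ x ≤ M := fun x hx => by
    rw [hv'd, List.mem_filter] at hx
    have := hvmem x hx.1
    have h2 : x < M + 1 := by simpa using hx.2
    exact ⟨this, by omega⟩
  have hMu' : M ∈ u' := by rw [hu'd, List.mem_filter]; exact ⟨hMu, by simp; omega⟩
  have hmv' : m ∈ v' := by rw [hv'd, List.mem_filter]; exact ⟨hmv, by simp; omega⟩
  have hu'sub : ∀ x ∈ u', x ∈ u := fun x hx => by rw [hu'd] at hx; exact List.mem_of_mem_filter hx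
  have hv'sub : ∀ x ∈ v', x ∈ v := fun x hx => by rw [hv'd] at hx; exact List.mem_of_mem_filter hx
  have hu'strict : ∀ x ∈ u', m < x := fun x hx => by
    have h1 := (hu'mem x hx).1
    have h2 : x ≠ m := fun he => hdisj x (hu'sub x hx) (he ▸ hmv)
    omega
  have hv'strict : ∀ x ∈ v', x < M := fun x hx => by
    have h1 := (hv'mem x hx).2
    have h2 : x ≠ M := fun he => hdisj M hMu (he ▸ hv'sub x hx)
    omega
  have hulow : ulow = List.range' 1 (m - 1) := by
    apply sorted_eq_of_toFinset_eq (hsu.filter _) (sorted_range' _ _)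
    rw [range'_toFinset]
    ext x
    simp only [List.mem_toFinset, hulowd, List.mem_filter, Finset.mem_Ico, decide_eq_true_eq]
    constructor
    · rintro ⟨hxu, hxm⟩
      have hx1 : 1 ≤ x := ((hlmem x).mp (by rw [hluv]; exact List.mem_append.mpr (Or.inl hxu))).1
      omega
    · rintro ⟨hx1, hxm⟩
      have hxl : x ∈ l := (hlmem x).mpr ⟨hx1, by omega⟩
      rw [hluv] at hxl
      rcases List.mem_append.mp hxl with h | h
      · exact ⟨h, by omega⟩
      · have := hvmem x h; omega
  have hvhigh : vhigh = List.range' (M + 1) (n - M) := by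
    apply sorted_eq_of_toFinset_eq (hsv.filter _) (sorted_range' _ _)
    rw [range'_toFinset]
    ext x
    simp only [List.mem_toFinset, hvhighd, List.mem_filter, Finset.mem_Ico, decide_eq_true_eq]
    constructor
    · rintro ⟨hxv, hxm⟩
      have hx2 : x ≤ n := ((hlmem x).mp (by rw [hluv]; exact List.mem_append.mpr (Or.inr hxv))).2
      omega
    · rintro ⟨hx1, hxm⟩
      have hxl : x ∈ l := (hlmem x).mpr ⟨by omega, by omega⟩
      rw [hluv] at hxl
      rcases List.mem_append.mp hxl with h | h
      · have := humem x h; omega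
      · exact ⟨h, by omega⟩
  have hl2 : l = List.range' 1 (m - 1) ++ (u' ++ v') ++ List.range' (M + 1) (n - M) := by
    rw [hluv, huspl, hvspl, hulow, hvhigh]
    simp [List.append_assoc]
  have hmidperm : (u' ++ v').Perm (List.range' m (M - m + 1)) := by
    have hp : (List.range' 1 (m - 1) ++ (u' ++ v') ++ List.range' (M + 1) (n - M)).Perm
        (List.range' 1 (m - 1) ++ List.range' m (M - m + 1) ++ List.range' (M + 1) (n - M)) := by
      rw [← hl2, ← range'_decomp h1m (by omega) hMn]
      exact hl
    have hp2 := (List.perm_append_right_iff _).mp hp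
    exact (List.perm_append_left_iff _).mp hp2
  have hmidlen : u'.length + v'.length = M - m + 1 := by
    have := hmidperm.length_eq
    simpa [List.length_append, List.length_range'] using this
  have hu'ne : u' ≠ [] := ne_nil_of_mem hMu'
  have hv'ne : v' ≠ [] := ne_nil_of_mem hmv'
  -- main bound on the window
  have hkK : M - m + 1 ≤ K := by
    by_contra hbig
    obtain ⟨sA, sB, hsubA, hsubB, hlenAB, hlastA, hheadB, hneA, hneB⟩ :
        ∃ sA sB : List ℕ, sA <+ u' ∧ sB <+ v' ∧ sA.length + sB.length = K + 1 ∧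
          sA.getLastD 0 = M ∧ sB.headD 0 = m ∧ sA ≠ [] ∧ sB ≠ [] := by
      have hMlast : u'.getLastD 0 = M :=
        getLastD_eq_of_max hsu' hMu' (fun y hy => (hu'mem y hy).2)
      have hmhead : v'.headD 0 = m :=
        headD_eq_of_min hsv' hmv' (fun y hy => (hv'mem y hy).1)
      rcases le_or_gt u'.length K with hle | hgt
      · have hv'len : K + 1 - u'.length ≤ v'.length := by omega
        have htpos : 1 ≤ K + 1 - u'.length := by omega
        refine ⟨u', v'.take (K + 1 - u'.length), Sublist.refl _, List.take_sublist _ _, ?_,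
          hMlast, ?_, hu'ne, ?_⟩
        · rw [List.length_take]; omega
        · rw [headD_take htpos hv'ne]
          exact hmhead
        · apply List.length_pos_iff.mp
          rw [List.length_take]; omega
      · have htake : (u'.take (K - 1)).length = K - 1 := by
          rw [List.length_take]; omega
        refine ⟨u'.take (K - 1) ++ [M], [m], ?_, List.singleton_sublist.mpr hmv', ?_,
          getLastD_concat _ _, rfl, by simp, by simp⟩
        · have hsub : u'.take (K - 1) ++ [M] <+ u'.take (K - 1) ++ u'.drop (K - 1) :=
            List.Sublist.append (Sublist.refl _)
              (List.singleton_sublist.mpr (hMlast ▸ getLastD_mem_drop (by omega)))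
          rwa [List.take_append_drop] at hsub
        · simp only [List.length_append, List.length_cons, List.length_nil, htake]
          omega
    have hsortA : sA.Pairwise (· < ·) := hsu'.sublist hsubA
    have hsortB : sB.Pairwise (· < ·) := hsv'.sublist hsubB
    have hu'u : u' <+ u := by rw [huspl]; exact List.sublist_append_right _ _
    have hv'v : v' <+ v := by rw [hvspl]; exact List.sublist_append_left _ _
    have hsubs : (sA ++ sB) <+ l := by
      rw [hluv]
      exact List.Sublist.append (hsubA.trans hu'u) (hsubB.trans hv'v)
    have hsnodup : (sA ++ sB).Nodup := hnodup.sublist hsubs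
    have hslen : (sA ++ sB).length = K + 1 := by
      rw [List.length_append]; exact hlenAB
    have hdesc1 : descents (sA ++ sB) = 1 :=
      descents_sorted_append hsortA hsortB hneA hneB (by rw [hlastA, hheadB]; exact hmM)
    have hAlen : 0 < sA.length := List.length_pos_iff.mpr hneA
    have hBlen : 0 < sB.length := List.length_pos_iff.mpr hneB
    have hsamem : ∀ x ∈ sA, x ∈ u' := fun x hx => hsubA.mem hx
    have hsbmem : ∀ x ∈ sB, x ∈ v' := fun x hx => hsubB.mem hx
    have hgd0 : (sA ++ sB).getD 0 0 ∈ sA := by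
      rw [List.getD_append _ _ _ _ hAlen]
      exact getD_mem hAlen
    have hgdK : (sA ++ sB).getD K 0 ∈ sB := by
      rw [List.getD_append_right _ _ _ _ (by omega : sA.length ≤ K)]
      exact getD_mem (by omega)
    have hmins : m ∈ sA ++ sB := by
      refine List.mem_append.mpr (Or.inr ?_)
      rw [← hheadB]; exact headD_mem hneB
    have hmaxs : M ∈ sA ++ sB := by
      refine List.mem_append.mpr (Or.inl ?_)
      rw [← hlastA]; exact getLastD_mem hneA
    have hstdmem : std (sA ++ sB) ∈ DLBasis K := by
      refine Or.inr ⟨?_, ?_, ?_, ?_⟩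
      · have := std_perm hsnodup
        rwa [hslen] at this
      · rw [std_descents, hdesc1]
      · rw [std_getD (by omega : 0 < (sA ++ sB).length)]
        have h2 : 2 ≤ rnk (sA ++ sB) ((sA ++ sB).getD 0 0) := by
          apply rnk_ge_two (getD_mem (by omega)) hmins
          exact hu'strict _ (hsamem _ hgd0)
        omega
      · rw [std_getD (by omega : K < (sA ++ sB).length)]
        have h2 : rnk (sA ++ sB) ((sA ++ sB).getD K 0) < (sA ++ sB).length := by
          apply rnk_lt_length hmaxs
          exact hv'strict _ (hsbmem _ hgdK)
        rw [hslen] at h2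
        omega
    exact havoid _ hstdmem ⟨sA ++ sB, hsubs, std_orderIso hsnodup⟩
  -- assemble the duplication-loss step
  refine ⟨List.range' 1 (m - 1), List.range' m (M - m + 1), List.range' (M + 1) (n - M),
    u', v', range'_decomp h1m (by omega) hMn, ?_, ?_, ?_⟩
  · rw [List.length_range']; omega
  · exact interleave_of_sorted (sorted_range' _ _) hsu' hsv' hmidperm
  · exact hl2
lemma headD_append {u v : List ℕ} (h : u ≠ []) : (u ++ v).headD 0 = u.headD 0 := by
  cases u with
  | nil => exact absurd rfl h
  | cons a t => rfl

lemma getLastD_append' {u v : List ℕ} (h : v ≠ []) : (u ++ v).getLastD 0 = v.getLastD 0 := by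
  induction u with
  | nil => rfl
  | cons a t ih =>
    rw [List.cons_append, getLastD_cons_ne (by simp [h]), ih]

lemma takeWhile_append_eq (p : ℕ → Bool) {xs : List ℕ} {y : ℕ} (ys : List ℕ)
    (hx : ∀ x ∈ xs, p x = true) (hy : p y = false) :
    (xs ++ y :: ys).takeWhile p = xs := by
  induction xs with
  | nil => simp [List.takeWhile_cons, hy]
  | cons a t ih =>
    rw [List.cons_append, List.takeWhile_cons, hx a (by simp)]
    rw [ih (fun x hx' => hx x (by simp [hx']))]
    simp

def gB (K : ℕ) (B : Finset ℕ) : List ℕ :=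
  (insert (K + 1) B).sort (· ≤ ·) ++ ((Finset.Icc 1 (K + 1)) \ insert (K + 1) B).sort (· ≤ ·)

lemma gB_facts {K : ℕ} (hK : 2 ≤ K) {B : Finset ℕ} (hB : B ⊆ Finset.Icc 2 K) :
    IsPermList (K + 1) (gB K B) ∧ descents (gB K B) = 1 ∧ (gB K B).getD 0 0 ≠ 1 ∧
      (gB K B).getD K 0 ≠ K + 1 := by
  set A := insert (K + 1) B with hA
  set C := Finset.Icc 1 (K + 1) \ A with hC
  have hAmem : ∀ x ∈ A, 2 ≤ x ∧ x ≤ K + 1 := by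
    intro x hx
    rcases Finset.mem_insert.mp hx with rfl | hx
    · omega
    · have := hB hx; rw [Finset.mem_Icc] at this; omega
  have hAsub : A ⊆ Finset.Icc 1 (K + 1) := fun x hx => by
    have := hAmem x hx; rw [Finset.mem_Icc]; omega
  have h1C : 1 ∈ C := by
    rw [hC, Finset.mem_sdiff, Finset.mem_Icc]
    exact ⟨by omega, fun h => by have := hAmem 1 h; omega⟩
  have hCmem : ∀ x ∈ C, 1 ≤ x ∧ x ≤ K + 1 ∧ x ∉ A := by
    intro x hx
    rw [hC, Finset.mem_sdiff, Finset.mem_Icc] at hx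
    exact ⟨hx.1.1, hx.1.2, hx.2⟩
  set L₁ := A.sort (· ≤ ·) with hL₁
  set L₂ := C.sort (· ≤ ·) with hL₂
  have hs₁ : L₁.Pairwise (· < ·) := (Finset.sortedLT_sort A).pairwise
  have hs₂ : L₂.Pairwise (· < ·) := (Finset.sortedLT_sort C).pairwise
  have hmem₁ : ∀ x, x ∈ L₁ ↔ x ∈ A := fun x => Finset.mem_sort _
  have hmem₂ : ∀ x, x ∈ L₂ ↔ x ∈ C := fun x => Finset.mem_sort _
  have hne₁ : L₁ ≠ [] := ne_nil_of_mem ((hmem₁ (K + 1)).mpr (Finset.mem_insert_self _ _))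
  have hne₂ : L₂ ≠ [] := ne_nil_of_mem ((hmem₂ 1).mpr h1C)
  have hlast₁ : L₁.getLastD 0 = K + 1 :=
    getLastD_eq_of_max hs₁ ((hmem₁ _).mpr (Finset.mem_insert_self _ _))
      (fun y hy => (hAmem y ((hmem₁ y).mp hy)).2)
  have hhead₂ : L₂.headD 0 = 1 :=
    headD_eq_of_min hs₂ ((hmem₂ 1).mpr h1C) (fun y hy => (hCmem y ((hmem₂ y).mp hy)).1)
  have hunion : A ∪ C = Finset.Icc 1 (K + 1) := by
    rw [hC, Finset.union_sdiff_of_subset hAsub]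
  have hlen : L₁.length + L₂.length = K + 1 := by
    rw [hL₁, hL₂, Finset.length_sort, Finset.length_sort]
    have hdis : Disjoint A C := by rw [hC]; exact Finset.disjoint_sdiff
    have := Finset.card_union_of_disjoint hdis
    rw [hunion, Nat.card_Icc] at this
    omega
  have hnodup : (gB K B).Nodup := by
    rw [gB, List.nodup_append]
    refine ⟨hs₁.nodup, hs₂.nodup, fun x hx y hx' hxy => ?_⟩
    subst hxy
    have h1 := (hmem₁ x).mp hx
    have h2 := ((hCmem x ((hmem₂ x).mp hx'))).2.2
    exact h2 h1
  have hperm : IsPermList (K + 1) (gB K B) := by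
    refine List.perm_of_nodup_nodup_toFinset_eq hnodup (sorted_range' _ _).nodup ?_
    rw [range'_toFinset, gB, List.toFinset_append]
    rw [← hL₁, ← hL₂, hL₁, hL₂, Finset.sort_toFinset, Finset.sort_toFinset, hunion]
    ext x
    rw [Finset.mem_Icc, Finset.mem_Ico]
    omega
  refine ⟨hperm, ?_, ?_, ?_⟩
  · exact descents_sorted_append hs₁ hs₂ hne₁ hne₂ (by rw [hlast₁, hhead₂]; omega)
  · rw [gB, List.getD_append _ _ _ _ (List.length_pos_iff.mpr hne₁), ← headD_eq_getD_zero]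
    have := (hAmem _ ((hmem₁ _).mp (headD_mem hne₁))).1
    omega
  · have hlen₂ : 0 < L₂.length := List.length_pos_iff.mpr hne₂
    rw [gB, List.getD_append_right _ _ _ _ (by omega : L₁.length ≤ K)]
    have hK' : K - L₁.length < L₂.length := by omega
    have hmem := (hmem₂ _).mp (getD_mem hK')
    intro he
    exact ((hCmem _ hmem).2.2) (he ▸ Finset.mem_insert_self _ _)

lemma gB_fst {K : ℕ} (hK : 2 ≤ K) {B : Finset ℕ} (hB : B ⊆ Finset.Icc 2 K) :
    ((gB K B).takeWhile (fun x => decide (x ≠ 1))).toFinset = insert (K + 1) B := by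
  set A := insert (K + 1) B with hA
  set C := Finset.Icc 1 (K + 1) \ A with hC
  have hAmem : ∀ x ∈ A, 2 ≤ x ∧ x ≤ K + 1 := by
    intro x hx
    rcases Finset.mem_insert.mp hx with rfl | hx
    · omega
    · have := hB hx; rw [Finset.mem_Icc] at this; omega
  have h1C : 1 ∈ C := by
    rw [hC, Finset.mem_sdiff, Finset.mem_Icc]
    exact ⟨by omega, fun h => by have := hAmem 1 h; omega⟩
  have hs₂ : (C.sort (· ≤ ·)).Pairwise (· < ·) := (Finset.sortedLT_sort C).pairwise
  have hne₂ : C.sort (· ≤ ·) ≠ [] := ne_nil_of_mem (Finset.mem_sort _ |>.mpr h1C)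
  have hhead₂ : (C.sort (· ≤ ·)).headD 0 = 1 :=
    headD_eq_of_min hs₂ (Finset.mem_sort _ |>.mpr h1C)
      (fun y hy => by
        have := Finset.mem_sort _ |>.mp hy
        rw [hC, Finset.mem_sdiff, Finset.mem_Icc] at this
        omega)
  obtain ⟨c, rest, hcr⟩ : ∃ c rest, C.sort (· ≤ ·) = c :: rest := by
    cases hcc : C.sort (· ≤ ·) with
    | nil => exact absurd hcc hne₂
    | cons c rest => exact ⟨c, rest, rfl⟩
  have hc1 : c = 1 := by rw [hcr] at hhead₂; simpa using hhead₂
  rw [gB, ← hA, ← hC, hcr, hc1]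
  rw [takeWhile_append_eq _ rest (fun x hx => by
    have := (hAmem x (Finset.mem_sort _ |>.mp hx)).1
    simp; omega) (by simp)]
  exact Finset.sort_toFinset _ _
lemma gB_surj {K : ℕ} (hK : 2 ≤ K) {d : List ℕ} (hd1 : IsPermList (K + 1) d)
    (hd2 : descents d = 1) (hd3 : d.getD 0 0 ≠ 1) (hd4 : d.getD K 0 ≠ K + 1) :
    ∃ B, B ⊆ Finset.Icc 2 K ∧ gB K B = d := by
  have hnodup : d.Nodup := hd1.nodup_iff.mpr (sorted_range' _ _).nodup
  have hdlen : d.length = K + 1 := by simpa [List.length_range'] using hd1.length_eq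
  have hdmem : ∀ x, x ∈ d ↔ 1 ≤ x ∧ x ≤ K + 1 := fun x => by
    rw [hd1.mem_iff, mem_range'_iff]; omega
  obtain ⟨u, v, hduv, hsu, hsv, hune, hvne, hdesc⟩ := split_of_descents_one hnodup hd2
  have hdisj : ∀ x ∈ u, x ∉ v := by
    have h := hnodup
    rw [hduv, List.nodup_append] at h
    exact fun x hx hv => h.2.2 x hx x hv rfl
  have hdne : d ≠ [] := by rw [hduv]; simp [hune]
  have hKu : K + 1 ∈ u := by
    have hKd : K + 1 ∈ d := (hdmem _).mpr ⟨by omega, le_refl _⟩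
    rw [hduv] at hKd
    rcases List.mem_append.mp hKd with h | h
    · exact h
    · exfalso
      have hmax : v.getLastD 0 = K + 1 :=
        getLastD_eq_of_max hsv h (fun y hy =>
          ((hdmem y).mp (by rw [hduv]; exact List.mem_append.mpr (Or.inr hy))).2)
      have h1 : d.getD (d.length - 1) 0 = K + 1 := by
        rw [← getLastD_eq_getD hdne, hduv, getLastD_append' hvne, hmax]
      have hidx : d.length - 1 = K := by omega
      rw [hidx] at h1
      exact hd4 h1
  have h1v : 1 ∈ v := by
    have h1d : (1 : ℕ) ∈ d := (hdmem _).mpr ⟨le_refl _, by omega⟩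
    rw [hduv] at h1d
    rcases List.mem_append.mp h1d with h | h
    · exfalso
      have hmin : u.headD 0 = 1 :=
        headD_eq_of_min hsu h (fun y hy =>
          ((hdmem y).mp (by rw [hduv]; exact List.mem_append.mpr (Or.inl hy))).1)
      have : d.getD 0 0 = 1 := by
        rw [← headD_eq_getD_zero, hduv, headD_append hune, hmin]
      exact hd3 this
    · exact h
  refine ⟨u.toFinset.erase (K + 1), ?_, ?_⟩
  · intro x hx
    rw [Finset.mem_erase, List.mem_toFinset] at hx
    obtain ⟨hne, hxu⟩ := hx
    have hxd : x ∈ d := by rw [hduv]; exact List.mem_append.mpr (Or.inl hxu)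
    have hb := (hdmem x).mp hxd
    have hx1 : x ≠ 1 := fun he => hdisj x hxu (he ▸ h1v)
    rw [Finset.mem_Icc]; omega
  · have hins : insert (K + 1) (u.toFinset.erase (K + 1)) = u.toFinset :=
      Finset.insert_erase (List.mem_toFinset.mpr hKu)
    rw [gB, hins]
    have hL1 : u.toFinset.sort (· ≤ ·) = u :=
      sorted_eq_of_toFinset_eq ((Finset.sortedLT_sort _).pairwise) hsu (Finset.sort_toFinset _ _)
    have hCv : Finset.Icc 1 (K + 1) \ u.toFinset = v.toFinset := by
      ext x
      rw [Finset.mem_sdiff, Finset.mem_Icc, List.mem_toFinset, List.mem_toFinset]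
      constructor
      · rintro ⟨hb, hnu⟩
        have hxd : x ∈ d := (hdmem x).mpr hb
        rw [hduv] at hxd
        rcases List.mem_append.mp hxd with h | h
        · exact absurd h hnu
        · exact h
      · intro hv
        refine ⟨(hdmem x).mp (by rw [hduv]; exact List.mem_append.mpr (Or.inr hv)), ?_⟩
        exact fun hu => hdisj x hu hv
    have hL2 : v.toFinset.sort (· ≤ ·) = v :=
      sorted_eq_of_toFinset_eq ((Finset.sortedLT_sort _).pairwise) hsv (Finset.sort_toFinset _ _)
    rw [hCv, hL1, hL2]
    exact hduv.symm

lemma basis_eq {K : ℕ} (hK : 2 ≤ K) :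
    DLBasis K = ↑(({[3, 2, 1], [3, 1, 4, 2], [2, 1, 4, 3]} : Finset (List ℕ)) ∪
      (Finset.Icc 2 K).powerset.image (gB K)) := by
  ext d
  rw [DLBasis, Finset.coe_union]
  simp only [Set.mem_union, Set.mem_insert_iff, Set.mem_singleton_iff, Set.mem_setOf_eq,
    Finset.mem_coe, Finset.mem_insert, Finset.mem_singleton, Finset.mem_image,
    Finset.mem_powerset]
  constructor
  · rintro (h | ⟨h1, h2, h3, h4⟩)
    · exact Or.inl h
    · obtain ⟨B, hB, hgB⟩ := gB_surj hK h1 h2 h3 h4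
      exact Or.inr ⟨B, hB, hgB⟩
  · rintro (h | ⟨B, hB, rfl⟩)
    · exact Or.inl h
    · exact Or.inr (gB_facts hK hB)

lemma basis_card {K : ℕ} (hK : 2 ≤ K) : (DLBasis K).ncard = 3 + 2 ^ (K - 1) := by
  rw [basis_eq hK, Set.ncard_coe_finset]
  have hdisj : Disjoint ({[3, 2, 1], [3, 1, 4, 2], [2, 1, 4, 3]} : Finset (List ℕ))
      ((Finset.Icc 2 K).powerset.image (gB K)) := by
    rw [Finset.disjoint_left]
    intro a ha hb
    obtain ⟨B, hB, rfl⟩ := Finset.mem_image.mp hb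
    have hdesc := (gB_facts hK (Finset.mem_powerset.mp hB)).2.1
    simp only [Finset.mem_insert, Finset.mem_singleton] at ha
    rcases ha with h | h | h <;> rw [h] at hdesc <;> simp [descents] at hdesc
  rw [Finset.card_union_of_disjoint hdisj]
  have hc1 : ({[3, 2, 1], [3, 1, 4, 2], [2, 1, 4, 3]} : Finset (List ℕ)).card = 3 := by decide
  have hinj : Set.InjOn (gB K) ((Finset.Icc 2 K).powerset : Finset (Finset ℕ)) := by
    intro B1 hB1 B2 hB2 heq
    simp only [Finset.mem_coe, Finset.mem_powerset] at hB1 hB2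
    have e1 := gB_fst hK hB1
    have e2 := gB_fst hK hB2
    rw [heq] at e1
    have hins : insert (K + 1) B1 = insert (K + 1) B2 := by rw [← e1, ← e2]
    have hK1 : K + 1 ∉ B1 := fun h => by have := hB1 h; rw [Finset.mem_Icc] at this; omega
    have hK2 : K + 1 ∉ B2 := fun h => by have := hB2 h; rw [Finset.mem_Icc] at this; omega
    rw [← Finset.erase_insert hK1, ← Finset.erase_insert hK2, hins]
  rw [Finset.card_image_of_injOn hinj, Finset.card_powerset, Nat.card_Icc, hc1]
  have he : K + 1 - 2 = K - 1 := by omega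
  rw [he]

theorem stmt11 (K : ℕ) (hK : 2 ≤ K) :
    (∀ n l, IsPermList n l →
      (DLStep K (List.range' 1 n) l ↔ ∀ b ∈ DLBasis K, ¬ IsPattern b l)) ∧
    (DLBasis K).ncard = 3 + 2 ^ (K - 1) := by
  refine ⟨fun n l hl => ⟨fun h => forward_dir hl h, fun h => backward_dir hK hl h⟩,
    basis_card hK⟩
end

section
/- In the worst case, at least ⌈2n(n−1)/K²⌉ duplication-loss steps of width at most K are necessary to obtain some permutation of Sₙ from the identity 1 2 ... n; specifically, any duplication-loss scenario of width at most K transforming the identity into the reversed identity n (n−1) ... 2 1 (which has n(n−1)/2 inversions) requires at least 2n(n−1)/K² steps, since each step creates at most K²/4 inversions. -/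
/-- number of inversions -/
def inv : List ℕ → ℕ
  | [] => 0
  | x :: l => l.countP (fun y => decide (y < x)) + inv l

/-- cross inversions between a and b (a before b) -/
def cross (a b : List ℕ) : ℕ :=
  (a.map (fun x => b.countP (fun y => decide (y < x)))).sum

lemma cross_append_right (a b c : List ℕ) : cross a (b ++ c) = cross a b + cross a c := by
  induction a with
  | nil => simp [cross]
  | cons x t ih =>
    simp only [cross, List.map_cons, List.sum_cons] at *
    rw [List.countP_append]
    omega

lemma cross_perm_left {a a' : List ℕ} (h : a.Perm a') (b : List ℕ) :
    cross a b = cross a' b := by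
  unfold cross
  exact (h.map _).sum_eq

lemma cross_perm_right (a : List ℕ) {b b' : List ℕ} (h : b.Perm b') :
    cross a b = cross a b' := by
  unfold cross
  congr 1
  exact List.map_congr_left (fun x _ => h.countP_eq _)

lemma cross_append_left (a b c : List ℕ) : cross (a ++ b) c = cross a c + cross b c := by
  simp [cross]

lemma inv_append (a b : List ℕ) : inv (a ++ b) = inv a + inv b + cross a b := by
  induction a with
  | nil => simp [inv, cross]
  | cons x t ih =>
    simp only [List.cons_append, inv, List.append_eq, ih, cross, List.map_cons, List.sum_cons,
      List.countP_append]
    omega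

lemma inv_three (a m c : List ℕ) :
    inv (a ++ m ++ c) = inv a + inv m + inv c + cross a m + cross a c + cross m c := by
  rw [inv_append, inv_append, cross_append_left]
  ring

lemma cross_le (a b : List ℕ) : cross a b ≤ a.length * b.length := by
  induction a with
  | nil => simp [cross]
  | cons x t ih =>
    simp only [cross, List.map_cons, List.sum_cons, List.length_cons] at *
    have h1 := List.countP_le_length (l := b) (p := fun y => decide (y < x))
    rw [Nat.succ_mul]
    omega

lemma interleave_perm {l a b : List ℕ} (h : Interleave l a b) : (a ++ b).Perm l := by
  induction h with
  | nil => simp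
  | @left x l a b _ ih => exact ih.cons x
  | @right x l a b _ ih => exact List.perm_middle.trans (ih.cons x)

lemma interleave_sublist_left {l a b : List ℕ} (h : Interleave l a b) : a.Sublist l := by
  induction h with
  | nil => simp
  | left _ ih => exact ih.cons₂ _
  | right _ ih => exact ih.cons _

lemma interleave_sublist_right {l a b : List ℕ} (h : Interleave l a b) : b.Sublist l := by
  induction h with
  | nil => simp
  | left _ ih => exact ih.cons _
  | right _ ih => exact ih.cons₂ _

lemma inv_interleave {l a b : List ℕ} (h : Interleave l a b) : inv a + inv b ≤ inv l := by
  induction h with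
  | nil => simp [inv]
  | @left x l a b h ih =>
    simp only [inv]
    have := (interleave_sublist_left h).countP_le (p := fun y => decide (y < x))
    omega
  | @right x l a b h ih =>
    simp only [inv]
    have := (interleave_sublist_right h).countP_le (p := fun y => decide (y < x))
    omega

lemma step_bound {K : ℕ} {τ σ : List ℕ} (h : DLStep K τ σ) :
    4 * inv σ ≤ 4 * inv τ + K ^ 2 := by
  obtain ⟨pre, w, post, w1, w2, rfl, hK, hw, rfl⟩ := h
  have hperm := interleave_perm hw
  have hlen : w1.length + w2.length = w.length := by
    simpa using hperm.length_eq
  have h1 : inv (w1 ++ w2) ≤ inv w + w1.length * w2.length := by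
    rw [inv_append]
    have := inv_interleave hw
    have := cross_le w1 w2
    omega
  have h2 : cross pre (w1 ++ w2) = cross pre w := cross_perm_right _ hperm
  have h3 : cross (w1 ++ w2) post = cross w post := cross_perm_left hperm _
  have h4 : 4 * (w1.length * w2.length) ≤ K ^ 2 := by
    have : w1.length + w2.length ≤ K := by omega
    nlinarith [sq_nonneg (w1.length - w2.length : ℤ)]
  rw [inv_three, inv_three, h2, h3]
  have h5 : inv (w1 ++ w2) = inv w1 + inv w2 + cross w1 w2 := inv_append _ _
  omega

lemma iter_bound {K q : ℕ} {τ σ : List ℕ} (h : DLIter K q τ σ) :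
    4 * inv σ ≤ 4 * inv τ + q * K ^ 2 := by
  induction q generalizing τ with
  | zero => cases h; omega
  | succ p ih =>
    obtain ⟨μ, hstep, hit⟩ := h
    have := step_bound hstep
    have := ih hit
    have : (p + 1) * K ^ 2 = p * K ^ 2 + K ^ 2 := by ring
    omega

lemma inv_sorted {l : List ℕ} (h : l.Pairwise (· ≤ ·)) : inv l = 0 := by
  induction l with
  | nil => rfl
  | cons x t ih =>
    simp only [List.pairwise_cons] at h
    simp only [inv, ih h.2]
    have : t.countP (fun y => decide (y < x)) = 0 := by
      rw [List.countP_eq_zero]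
      intro y hy
      simpa using not_lt_of_ge (h.1 y hy)
    omega

lemma inv_desc {l : List ℕ} (h : l.Pairwise (fun a b => b < a)) :
    2 * inv l = l.length * (l.length - 1) := by
  induction l with
  | nil => rfl
  | cons x t ih =>
    simp only [List.pairwise_cons] at h
    have hc : t.countP (fun y => decide (y < x)) = t.length := by
      rw [List.countP_eq_length]
      intro y hy
      simpa using h.1 y hy
    simp only [inv, hc, List.length_cons]
    have ht := ih h.2
    rcases Nat.eq_zero_or_pos t.length with h0 | h0
    · simp_all
    · obtain ⟨m, hm⟩ : ∃ m, t.length = m + 1 := ⟨t.length - 1, by omega⟩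
      rw [hm] at ht ⊢
      have e1 : (m + 1 + 1) * (m + 1 + 1 - 1) = m * m + 3 * m + 2 := by
        rw [Nat.add_sub_cancel]; ring
      have e2 : (m + 1) * (m + 1 - 1) = m * m + m := by
        rw [Nat.add_sub_cancel]; ring
      linarith

theorem stmt18 (n K q : ℕ)
    (h : DLIter K q (List.range' 1 n) ((List.range' 1 n).reverse)) :
    2 * (n * (n - 1)) ≤ q * K ^ 2 := by
  have hb := iter_bound h
  have h0 : inv (List.range' 1 n) = 0 := by
    apply inv_sorted
    exact (List.pairwise_lt_range' (s := 1) (n := n)).imp le_of_lt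
  have hr : 2 * inv ((List.range' 1 n).reverse) = n * (n - 1) := by
    rw [inv_desc]
    · simp
    · rw [List.pairwise_reverse]
      exact List.pairwise_lt_range' (s := 1) (n := n)
  omega
end
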